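/- Let p be an odd prime, and let r, t be non-negative integers with r ≥ t and r - t even such that r_0 ≠ p - 1, t_0 ≠ p - 1, r_0 and t_0 have different parities, and r_0 + t_0 ≥ p - 2 (where n_i denotes the i-th base-p digit of n). If (N, σ, δ, I) is an admissible quadruple for the pair (r, t) with N ≥ 1, then 0 ∈ I, σ_0 = p - 1 - t_0, and δ_0 = (r_0 + t_0 + 2 - p)/2. -/
import Mathlib


/-- The `i`-th digit of the base-`p` expansion of `n`. -/
def digit (p n i : ℕ) : ℕ := n / p ^ i % p

/-- `σ_I = ∑_{i ∈ I} p^i σ_i`. -/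
def digitSum (p σ : ℕ) (I : Finset ℕ) : ℕ := ∑ i ∈ I, p ^ i * digit p σ i

/-- An admissible triple `(N, σ, δ)`. -/
def AdmissibleTriple (p N σ δ : ℕ) : Prop :=
  σ < p ^ (N + 1) - p ^ N ∧ δ < p ^ (N + 1) - p ^ N ∧
  (∀ i < N, digit p σ i + digit p δ i ≤ p - 1) ∧
  digit p σ N + digit p δ N < p - 1

/-- An admissible quadruple `(N, σ, δ, I)`. -/
def AdmissibleQuadruple (p N σ δ : ℕ) (I : Finset ℕ) : Prop :=
  AdmissibleTriple p N σ δ ∧ ∀ i ∈ I, digit p σ i ≠ 0 ∧ i ≠ N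

/-- An admissible quadruple for the pair `(r, t)`. -/
def AdmissibleQuadrupleFor (p r t N σ δ : ℕ) (I : Finset ℕ) : Prop :=
  AdmissibleQuadruple p N σ δ I ∧
  t + 2 * digitSum p σ I = p ^ N - 1 + σ ∧
  r ≡ p ^ N - 1 + σ + 2 * δ [MOD 2 * p ^ (N + 1)]

theorem aux_cases (p a b : ℕ) (hp : 0 < p) (h : Nat.ModEq p a b) (ha : a < 4*p) (hb : b < 4*p) :
    a = b ∨ a = b + p ∨ b = a + p ∨ a = b + 2*p ∨ b = a + 2*p ∨ a = b + 3*p ∨ b = a + 3*p := by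
  obtain ⟨k, hk⟩ := h.dvd
  have hp' : (0:ℤ) < p := by exact_mod_cast hp
  have hA : (0:ℤ) ≤ (a:ℤ) := by positivity
  have hB : (0:ℤ) ≤ (b:ℤ) := by positivity
  have hA' : (a:ℤ) < 4*p := by exact_mod_cast ha
  have hB' : (b:ℤ) < 4*p := by exact_mod_cast hb
  have h1 : k < 4 := by nlinarith
  have h2 : -4 < k := by nlinarith
  interval_cases k <;> omega

theorem stmt_16 (p : ℕ) (hp : p.Prime) (hodd : Odd p) (r t : ℕ) (hrt : t ≤ r)
    (hev : Even (r - t)) (hr0 : digit p r 0 ≠ p - 1) (ht0 : digit p t 0 ≠ p - 1)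
    (hpar : digit p r 0 % 2 ≠ digit p t 0 % 2)
    (hsum : p - 2 ≤ digit p r 0 + digit p t 0)
    (N σ δ : ℕ) (I : Finset ℕ)
    (h : AdmissibleQuadrupleFor p r t N σ δ I) (hN : 1 ≤ N) :
    0 ∈ I ∧ digit p σ 0 = p - 1 - digit p t 0 ∧
      2 * digit p δ 0 + p = digit p r 0 + digit p t 0 + 2 := by
  obtain ⟨⟨⟨-, -, hdig, -⟩, hI⟩, hteq, hrmod⟩ := h
  have hp0 : 0 < p := hp.pos
  have hpodd : p % 2 = 1 := Nat.odd_iff.mp hodd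
  have hp3 : 3 ≤ p := by have := hp.two_le; omega
  have hd00 : ∀ n, digit p n 0 = n % p := by intro n; simp [digit]
  have hdig0 : digit p σ 0 + digit p δ 0 ≤ p - 1 := hdig 0 hN
  have hpN : p ≤ p ^ N := Nat.le_self_pow (by omega) p
  -- reduce r-congruence mod p
  have hrmodp : r ≡ p ^ N - 1 + σ + 2 * δ [MOD p] :=
    hrmod.of_dvd (Dvd.dvd.mul_left (dvd_pow_self p (Nat.succ_ne_zero N)) 2)
  have e3' : p ^ N - 1 + σ + 2 * δ ≡ (p - 1) + σ % p + 2 * (δ % p) [MOD p] := by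
    have heq : p ^ N - 1 + σ + 2 * δ = ((p - 1) + σ + 2 * δ) + (p ^ N - p) := by omega
    have hd : p ∣ p ^ N - p := Nat.dvd_sub (dvd_pow_self p (by omega)) dvd_rfl
    calc p ^ N - 1 + σ + 2 * δ = ((p - 1) + σ + 2 * δ) + (p ^ N - p) := heq
      _ ≡ ((p - 1) + σ + 2 * δ) + 0 [MOD p] :=
          (Nat.ModEq.refl _).add ((Nat.modEq_zero_iff_dvd).mpr hd)
      _ = (p - 1) + σ + 2 * δ := by omega
      _ ≡ (p - 1) + σ % p + 2 * (δ % p) [MOD p] :=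
          (((Nat.ModEq.refl (p-1)).add (Nat.mod_modEq σ p)).add
            ((Nat.mod_modEq δ p).mul_left 2)).symm
  have key2 : r % p ≡ (p - 1) + σ % p + 2 * (δ % p) [MOD p] :=
    ((Nat.mod_modEq r p).trans hrmodp).trans e3'
  have dis2 := aux_cases p _ _ hp0 key2 (by have := Nat.mod_lt r hp0; omega)
    (by have := Nat.mod_lt σ hp0; have := Nat.mod_lt δ hp0; omega)
  -- t-equation mod p
  have e3 : p ^ N - 1 + σ ≡ (p - 1) + σ % p [MOD p] := by
    have heq : p ^ N - 1 + σ = ((p - 1) + σ) + (p ^ N - p) := by omega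
    have hd : p ∣ p ^ N - p := Nat.dvd_sub (dvd_pow_self p (by omega)) dvd_rfl
    calc p ^ N - 1 + σ = ((p - 1) + σ) + (p ^ N - p) := heq
      _ ≡ ((p - 1) + σ) + 0 [MOD p] :=
          (Nat.ModEq.refl _).add ((Nat.modEq_zero_iff_dvd).mpr hd)
      _ = (p - 1) + σ := by omega
      _ ≡ (p - 1) + σ % p [MOD p] :=
          ((Nat.ModEq.refl (p-1)).add (Nat.mod_modEq σ p)).symm
  simp only [hd00] at hr0 ht0 hpar hsum hdig0 ⊢
  have hrb : r % p < p := Nat.mod_lt r hp0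
  have htb : t % p < p := Nat.mod_lt t hp0
  have hsb : σ % p < p := Nat.mod_lt σ hp0
  have hdb : δ % p < p := Nat.mod_lt δ hp0
  by_cases h0 : 0 ∈ I
  · have hrest : p ∣ ∑ i ∈ I.erase 0, p ^ i * digit p σ i := by
      apply Finset.dvd_sum
      intro i hi
      exact Dvd.dvd.mul_right (dvd_pow_self p (Finset.ne_of_mem_erase hi)) _
    have hSeq : digitSum p σ I = σ % p + ∑ i ∈ I.erase 0, p ^ i * digit p σ i := by
      rw [digitSum, ← Finset.add_sum_erase _ _ h0, pow_zero, one_mul, hd00]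
    have hScong : digitSum p σ I ≡ σ % p [MOD p] := by
      rw [hSeq]
      simpa using (Nat.ModEq.refl (σ % p)).add ((Nat.modEq_zero_iff_dvd).mpr hrest)
    have key1 : t % p + 2 * (σ % p) ≡ (p - 1) + σ % p [MOD p] :=
      (((Nat.mod_modEq t p).add (hScong.symm.mul_left 2)).trans (by rw [hteq])).trans e3
    have dis1 := aux_cases p _ _ hp0 key1 (by omega) (by omega)
    exact ⟨h0, by omega, by omega⟩
  · have hrest : p ∣ digitSum p σ I := by
      apply Finset.dvd_sum
      intro i hi
      have : i ≠ 0 := by rintro rfl; exact h0 hi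
      exact Dvd.dvd.mul_right (dvd_pow_self p this) _
    have hScong : digitSum p σ I ≡ 0 [MOD p] := (Nat.modEq_zero_iff_dvd).mpr hrest
    have key1 : t % p + 2 * 0 ≡ (p - 1) + σ % p [MOD p] :=
      (((Nat.mod_modEq t p).add (hScong.symm.mul_left 2)).trans (by rw [hteq])).trans e3
    have dis1 := aux_cases p _ _ hp0 key1 (by omega) (by omega)
    exact absurd rfl (by omega : (0:ℕ) ≠ 0)
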